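/- Let (Ω, ℱ, ℙ) be a probability space, (ℱ_n)_{n∈ℕ} a filtration, and X : Ω → [0,∞) a random variable such that E[exp(α X²)] < ∞ for some α > 0. Let M := sup_n E[X | ℱ_n]. Then M ∈ L^q for every q ∈ [1,∞), and moreover there exists β > 0 such that E[exp(β M²)] < ∞ (i.e. M again has Gauss tails). -/

import Mathlib

open MeasureTheory Real Set
open scoped NNReal ENNReal

lemma aux_le_exp {a x : ℝ} (ha : 0 < a) (hx : 0 ≤ x) :
    x ≤ (1 + a⁻¹) * Real.exp (a * x ^ 2) := by
  have h1 : (1:ℝ) ≤ Real.exp (a * x ^ 2) := Real.one_le_exp (by positivity)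
  have h2 : a * x ^ 2 + 1 ≤ Real.exp (a * x ^ 2) := Real.add_one_le_exp _
  have ha' : 0 < a⁻¹ := by positivity
  have hc : a⁻¹ * a = 1 := inv_mul_cancel₀ ha.ne'
  nlinarith [sq_nonneg (x - 1), mul_le_mul_of_nonneg_left h2 ha'.le]

lemma aux_rpow_le {β q x : ℝ} (hβ : 0 < β) (hq : 0 ≤ q) (hx : 0 ≤ x) :
    x ^ q ≤ Real.exp (q ^ 2 / (4 * β)) * Real.exp (β * x ^ 2) := by
  rcases le_or_gt x 1 with h | h
  · have h0 : x ^ q ≤ 1 := Real.rpow_le_one hx h hq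
    have h1 : (1:ℝ) ≤ Real.exp (q ^ 2 / (4 * β)) := Real.one_le_exp (by positivity)
    have h2 : (1:ℝ) ≤ Real.exp (β * x ^ 2) := Real.one_le_exp (by positivity)
    nlinarith
  · have hx0 : 0 < x := lt_trans one_pos h
    rw [Real.rpow_def_of_pos hx0, ← Real.exp_add]
    apply Real.exp_le_exp.2
    have hlog : Real.log x ≤ x := (Real.log_le_sub_one_of_pos hx0).trans (by linarith)
    have h3 : q * Real.log x ≤ q * x := mul_le_mul_of_nonneg_left hlog hq
    have key : q * x ≤ q ^ 2 / (4 * β) + β * x ^ 2 := by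
      rw [div_add' _ _ _ (by positivity : (4:ℝ) * β ≠ 0), le_div_iff₀ (by positivity)]
      nlinarith [sq_nonneg (q - 2 * β * x)]
    linarith

/-- Let `(Ω,ℱ,ℙ)` be a probability space, `(ℱ_n)` a filtration and
`X ≥ 0` a random variable with `E[exp(α X²)] < ∞` for some `α > 0`. Then
`M := sup_n E[X | ℱ_n]` lies in `L^q` for every `q ∈ [1,∞)` and again has Gauss tails:
`E[exp(β M²)] < ∞` for some `β > 0`. -/
theorem statement17 {Ω : Type*} {m : MeasurableSpace Ω} (μ : Measure Ω)
    [IsProbabilityMeasure μ] (ℱ : Filtration ℕ m)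
    (X : Ω → ℝ) (hXm : Measurable X) (hX0 : ∀ ω, 0 ≤ X ω)
    (α : ℝ) (hα : 0 < α)
    (hint : Integrable (fun ω => Real.exp (α * X ω ^ 2)) μ) :
    (∀ q : ℝ, 1 ≤ q →
      MemLp (fun ω => ⨆ n : ℕ, (μ[X|ℱ n]) ω) (ENNReal.ofReal q) μ) ∧
    ∃ β > (0:ℝ),
      Integrable (fun ω => Real.exp (β * (⨆ n : ℕ, (μ[X|ℱ n]) ω) ^ 2)) μ := by
  set f : ℕ → Ω → ℝ := fun n => μ[X|ℱ n] with hfdef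
  -- X is integrable
  have hXint : Integrable X μ := by
    refine Integrable.mono' (hint.const_mul (1 + α⁻¹)) hXm.aestronglyMeasurable ?_
    refine Filter.Eventually.of_forall fun ω => ?_
    rw [Real.norm_eq_abs, abs_of_nonneg (hX0 ω)]
    exact aux_le_exp hα (hX0 ω)
  -- f is a martingale
  have hmart : Martingale f ℱ μ := martingale_condExp X ℱ μ
  have hfn0 : ∀ n : ℕ, 0 ≤ᵐ[μ] f n := fun n =>
    condExp_nonneg (Filter.Eventually.of_forall hX0)
  -- the nonnegative version g
  set g : ℕ → Ω → ℝ := fun n ω => max (f n ω) 0 with hgdef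
  have hgf : ∀ n, g n =ᵐ[μ] f n := fun n => (hfn0 n).mono fun ω hω => max_eq_left hω
  have hg0 : (0 : ℕ → Ω → ℝ) ≤ g := fun n ω => le_max_right _ _
  have hgadp : StronglyAdapted ℱ g := fun n => by
    have h1 : StronglyMeasurable[ℱ n] (f n) := hmart.stronglyAdapted n
    have h2 : StronglyMeasurable[ℱ n] (fun _ : Ω => (0:ℝ)) := stronglyMeasurable_const
    letI : MeasurableSpace Ω := ℱ n
    exact h1.sup h2
  have hgint : ∀ n, Integrable (g n) μ := fun n =>
    (integrable_condExp (f := X)).congr (hgf n).symm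
  have hgsub : Submartingale g ℱ μ := by
    refine ⟨hgadp, fun i j hij => ?_, hgint⟩
    calc g i =ᵐ[μ] f i := hgf i
    _ =ᵐ[μ] μ[f j|ℱ i] := (hmart.condExp_ae_eq hij).symm
    _ =ᵐ[μ] μ[g j|ℱ i] := condExp_congr_ae (hgf j).symm
    _ ≤ᵐ[μ] μ[g j|ℱ i] := Filter.EventuallyLE.refl _ _
  -- the maximal sets
  set A : ℝ → ℕ → Set Ω := fun t n =>
    {ω | t ≤ (Finset.range (n + 1)).sup' Finset.nonempty_range_add_one fun k => g k ω} with hAdef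
  have hAmeas : ∀ t (n : ℕ), MeasurableSet[ℱ n] (A t n) := by
    intro t n
    letI : MeasurableSpace Ω := ℱ n
    have hsm : Measurable[ℱ n] fun ω =>
        (Finset.range (n + 1)).sup' Finset.nonempty_range_add_one fun k => g k ω := by
      refine Finset.measurable_range_sup'' fun k hk => ?_
      have hk' : k ≤ n := hk
      exact ((hgadp k).measurable.le (ℱ.mono hk'))
    exact measurableSet_le measurable_const hsm
  have hAmono : ∀ t, Monotone (A t) := by
    intro t i j hij ω hω
    simp only [hAdef, Set.mem_setOf_eq] at hω ⊢
    refine le_trans hω (Finset.sup'_mono _ ?_ Finset.nonempty_range_add_one)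
    exact Finset.range_subset_range.2 (by omega)
  -- Doob estimate : t * μ (A t n) ≤ ∫_{A t n} X
  have hDoob : ∀ t : ℝ, 0 < t → ∀ n : ℕ,
      t * (μ (A t n)).toReal ≤ ∫ ω in A t n, X ω ∂μ := by
    intro t ht n
    have hmax := maximal_ineq hgsub hg0 (ε := t.toNNReal) n
    have hcoe : ((t.toNNReal : ℝ≥0) : ℝ) = t := Real.coe_toNNReal t ht.le
    rw [hcoe] at hmax
    have hAm : MeasurableSet (A t n) := ℱ.le n _ (hAmeas t n)
    have hgX : ∫ ω in A t n, g n ω ∂μ = ∫ ω in A t n, X ω ∂μ := by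
      have h1 : ∫ ω in A t n, g n ω ∂μ = ∫ ω in A t n, f n ω ∂μ :=
        setIntegral_congr_ae hAm ((hgf n).mono fun ω hω _ => hω)
      rw [h1, hfdef]
      exact setIntegral_condExp (ℱ.le n) hXint (hAmeas t n)
    have h2 : (t.toNNReal • μ (A t n)).toReal ≤ (ENNReal.ofReal (∫ ω in A t n, g n ω ∂μ)).toReal :=
      ENNReal.toReal_mono ENNReal.ofReal_ne_top hmax
    rw [ENNReal.toReal_smul, ENNReal.toReal_ofReal
      (setIntegral_nonneg hAm fun ω _ => hg0 n ω)] at h2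
    rw [← hgX]
    simpa [NNReal.smul_def, hcoe] using h2
  -- constants
  set C : ℝ := ∫ ω, Real.exp (α * X ω ^ 2) ∂μ with hCdef
  set c₁ : ℝ := 1 + (α / 2)⁻¹ with hc₁def
  have hc₁pos : 0 < c₁ := by rw [hc₁def]; positivity
  have hXbound : ∀ ω, X ω ≤ c₁ * Real.exp (α * X ω ^ 2) := by
    intro ω
    refine (aux_le_exp (half_pos hα) (hX0 ω)).trans ?_
    refine mul_le_mul_of_nonneg_left (Real.exp_le_exp.2 ?_) hc₁pos.le
    nlinarith [sq_nonneg (X ω)]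
  -- tail integral bound for X
  have hind_meas : ∀ δ : ℝ, Measurable (fun ω => if δ ≤ X ω then X ω else 0) := fun δ =>
    Measurable.ite (measurableSet_le measurable_const hXm) hXm measurable_const
  have hind_int : ∀ δ : ℝ, Integrable (fun ω => if δ ≤ X ω then X ω else 0) μ := by
    intro δ
    refine Integrable.mono' (hint.const_mul c₁) (hind_meas δ).aestronglyMeasurable ?_
    refine Filter.Eventually.of_forall fun ω => ?_
    by_cases h : δ ≤ X ω
    · simp only [if_pos h, Real.norm_eq_abs, abs_of_nonneg (hX0 ω)]
      exact hXbound ω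
    · simp only [if_neg h, norm_zero]
      positivity
  have htail : ∀ δ : ℝ, 0 < δ →
      ∫ ω, (if δ ≤ X ω then X ω else 0) ∂μ ≤ c₁ * Real.exp (-(α / 2) * δ ^ 2) * C := by
    intro δ hδ
    have hpt : ∀ ω, (if δ ≤ X ω then X ω else 0)
        ≤ c₁ * Real.exp (-(α / 2) * δ ^ 2) * Real.exp (α * X ω ^ 2) := by
      intro ω
      split_ifs with h
      · have e1 : X ω ≤ c₁ * Real.exp (α / 2 * X ω ^ 2) := aux_le_exp (half_pos hα) (hX0 ω)
        have e2 : Real.exp (α / 2 * X ω ^ 2)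
            ≤ Real.exp (-(α / 2) * δ ^ 2) * Real.exp (α * X ω ^ 2) := by
          rw [← Real.exp_add]
          apply Real.exp_le_exp.2
          nlinarith [pow_le_pow_left₀ hδ.le h 2]
        calc X ω ≤ c₁ * Real.exp (α / 2 * X ω ^ 2) := e1
        _ ≤ c₁ * (Real.exp (-(α / 2) * δ ^ 2) * Real.exp (α * X ω ^ 2)) :=
          mul_le_mul_of_nonneg_left e2 hc₁pos.le
        _ = c₁ * Real.exp (-(α / 2) * δ ^ 2) * Real.exp (α * X ω ^ 2) := by ring
      · positivity
    calc ∫ ω, (if δ ≤ X ω then X ω else 0) ∂μ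
        ≤ ∫ ω, c₁ * Real.exp (-(α / 2) * δ ^ 2) * Real.exp (α * X ω ^ 2) ∂μ :=
          integral_mono (hind_int δ) (hint.const_mul _) hpt
    _ = c₁ * Real.exp (-(α / 2) * δ ^ 2) * C := by rw [integral_const_mul]
  -- combining: measure bound for A t n
  set D : ℝ → ℝ := fun t => c₁ * Real.exp (-(α / 2) * (t / 2) ^ 2) * C with hDdef
  have hAbound : ∀ t : ℝ, 0 < t → ∀ n : ℕ,
      (μ (A t n)).toReal * t ≤ 2 * D t := by
    intro t ht n
    have hAm : MeasurableSet (A t n) := ℱ.le n _ (hAmeas t n)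
    set mA := (μ (A t n)).toReal with hmAdef
    have hmA0 : 0 ≤ mA := ENNReal.toReal_nonneg
    have s1 : ∫ ω in A t n, X ω ∂μ
        ≤ ∫ ω in A t n, (t / 2 + if t / 2 ≤ X ω then X ω else 0) ∂μ := by
      refine setIntegral_mono_on hXint.integrableOn
        (((integrable_const (t / 2)).add (hind_int (t / 2))).integrableOn) hAm ?_
      intro ω _
      by_cases h : t / 2 ≤ X ω
      · rw [if_pos h]; linarith
      · rw [if_neg h]; push_neg at h; linarith
    have s2 : ∫ ω in A t n, (t / 2 + if t / 2 ≤ X ω then X ω else 0) ∂μ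
        = t / 2 * mA + ∫ ω in A t n, (if t / 2 ≤ X ω then X ω else 0) ∂μ := by
      rw [integral_add (integrable_const _).integrableOn (hind_int (t / 2)).integrableOn,
        setIntegral_const]
      rw [smul_eq_mul, mul_comm]; rfl
    have s3 : ∫ ω in A t n, (if t / 2 ≤ X ω then X ω else 0) ∂μ
        ≤ ∫ ω, (if t / 2 ≤ X ω then X ω else 0) ∂μ := by
      refine setIntegral_le_integral (hind_int (t / 2)) ?_
      refine Filter.Eventually.of_forall fun ω => ?_
      have h0 : (0:ℝ) ≤ if t / 2 ≤ X ω then X ω else 0 := by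
        split_ifs with h
        exacts [hX0 ω, le_rfl]
      exact h0
    have s4 := htail (t / 2) (half_pos ht)
    have s0 := hDoob t ht n
    rw [hDdef]
    nlinarith [s0, s1, s2, s3, s4]
  -- M and its measurability
  set M : Ω → ℝ := fun ω => ⨆ n : ℕ, f n ω with hMdef
  have hMmeas : Measurable M :=
    Measurable.iSup fun n => stronglyMeasurable_condExp.mono (ℱ.le n) |>.measurable
  have hM0 : ∀ᵐ ω ∂μ, 0 ≤ M ω := by
    filter_upwards [ae_all_iff.2 hfn0] with ω hω
    by_cases h : BddAbove (Set.range fun n => f n ω)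
    · exact le_trans (hω 0) (le_ciSup h 0)
    · rw [hMdef]; simp only []
      rw [Real.iSup_of_not_bddAbove h]
  -- tail bound for M
  have hMtail : ∀ t : ℝ, 0 < t →
      μ {ω | t < M ω} ≤ ENNReal.ofReal (2 * D t / t) := by
    intro t ht
    have hsub : {ω | t < M ω} ⊆ ⋃ n, A t n := by
      intro ω hω
      simp only [Set.mem_setOf_eq, hMdef] at hω
      by_cases h : BddAbove (Set.range fun n => f n ω)
      · obtain ⟨n, hn⟩ := exists_lt_of_lt_ciSup hω
        refine Set.mem_iUnion.2 ⟨n, ?_⟩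
        simp only [hAdef, Set.mem_setOf_eq]
        have h1 : f n ω ≤ g n ω := le_max_left _ _
        have h2 : g n ω ≤ (Finset.range (n + 1)).sup' Finset.nonempty_range_add_one
            fun k => g k ω := Finset.le_sup' (fun k => g k ω) (Finset.self_mem_range_succ n)
        linarith [hn]
      · rw [Real.iSup_of_not_bddAbove h] at hω
        linarith
    calc μ {ω | t < M ω} ≤ μ (⋃ n, A t n) := measure_mono hsub
    _ = ⨆ n, μ (A t n) := by
        refine Directed.measure_iUnion ?_
        exact Monotone.directed_le (hAmono t)
    _ ≤ ENNReal.ofReal (2 * D t / t) := by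
        refine iSup_le fun n => ?_
        rw [← ENNReal.ofReal_toReal (measure_ne_top μ (A t n))]
        refine ENNReal.ofReal_le_ofReal ?_
        rw [le_div_iff₀ ht]
        exact hAbound t ht n
  -- the Gaussian parameter
  set β : ℝ := α / 16 with hβdef
  have hβpos : 0 < β := by rw [hβdef]; positivity
  have hC0 : 0 ≤ C := integral_nonneg fun ω => (Real.exp_pos _).le
  have hD0 : ∀ t : ℝ, 0 ≤ D t := fun t => by
    rw [hDdef]; positivity
  -- FTC for the layer cake
  have hderiv : ∀ t : ℝ, HasDerivAt (fun s => Real.exp (β * s ^ 2))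
      (2 * β * t * Real.exp (β * t ^ 2)) t := by
    intro t
    have h1 : HasDerivAt (fun s : ℝ => β * s ^ 2) (β * (2 * t ^ 1)) t :=
      (hasDerivAt_pow 2 t).const_mul β
    have h2 := h1.exp
    convert h2 using 1
    simp [pow_one]
    ring
  have hcont : Continuous fun t : ℝ => 2 * β * t * Real.exp (β * t ^ 2) := by fun_prop
  have hFTC : ∀ x : ℝ, (∫ t in (0:ℝ)..x, 2 * β * t * Real.exp (β * t ^ 2))
      = Real.exp (β * x ^ 2) - 1 := by
    intro x
    rw [intervalIntegral.integral_eq_sub_of_hasDerivAt (fun t _ => hderiv t)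
      (hcont.intervalIntegrable _ _)]
    simp
  have hM0' : 0 ≤ᵐ[μ] M := hM0
  have hlayer := lintegral_comp_eq_lintegral_meas_lt_mul μ hM0' hMmeas.aemeasurable
      (fun t _ => hcont.intervalIntegrable 0 t)
      ((ae_restrict_iff' measurableSet_Ioi).2
        (Filter.Eventually.of_forall fun t (ht : t ∈ Ioi 0) => by
          have ht' : 0 < t := ht
          positivity))
  simp_rw [hFTC] at hlayer
  -- bound the right-hand side
  have hRHS : (∫⁻ t in Ioi 0, μ {a | t < M a}
        * ENNReal.ofReal (2 * β * t * Real.exp (β * t ^ 2)))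
      ≤ ∫⁻ t in Ioi 0, ENNReal.ofReal (4 * β * c₁ * C * Real.exp (-(α / 16) * t ^ 2)) := by
    refine lintegral_mono_ae ((ae_restrict_iff' measurableSet_Ioi).2
      (Filter.Eventually.of_forall fun t (ht : t ∈ Ioi 0) => ?_))
    have ht' : 0 < t := ht
    have e1 : μ {a | t < M a} * ENNReal.ofReal (2 * β * t * Real.exp (β * t ^ 2))
        ≤ ENNReal.ofReal (2 * D t / t) * ENNReal.ofReal (2 * β * t * Real.exp (β * t ^ 2)) :=
      mul_le_mul_left (hMtail t ht') _
    refine e1.trans ?_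
    rw [← ENNReal.ofReal_mul (by positivity)]
    refine ENNReal.ofReal_le_ofReal (le_of_eq ?_)
    have hexp : Real.exp (-(α / 2) * (t / 2) ^ 2) * Real.exp (β * t ^ 2)
        = Real.exp (-(α / 16) * t ^ 2) := by
      rw [← Real.exp_add]
      congr 1
      rw [hβdef]; ring
    rw [hDdef]
    simp only []
    rw [← hexp]
    field_simp
    ring
  have hgauss : (∫⁻ t in Ioi 0,
      ENNReal.ofReal (4 * β * c₁ * C * Real.exp (-(α / 16) * t ^ 2))) < ⊤ := by
    have hInt : Integrable (fun t : ℝ => 4 * β * c₁ * C * Real.exp (-(α / 16) * t ^ 2)) :=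
      (integrable_exp_neg_mul_sq (by positivity)).const_mul _
    exact lt_of_le_of_lt (setLIntegral_le_lintegral _ _) hInt.lintegral_lt_top
  have hfin : (∫⁻ ω, ENNReal.ofReal (Real.exp (β * M ω ^ 2) - 1) ∂μ) < ⊤ := by
    rw [hlayer]; exact lt_of_le_of_lt hRHS hgauss
  have hexpM_meas : Measurable fun ω => Real.exp (β * M ω ^ 2) :=
    Real.measurable_exp.comp ((hMmeas.pow_const 2).const_mul β)
  have hexp_int : Integrable (fun ω => Real.exp (β * M ω ^ 2)) μ := by
    refine ⟨hexpM_meas.aestronglyMeasurable, ?_⟩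
    rw [hasFiniteIntegral_iff_ofReal (Filter.Eventually.of_forall fun ω => (Real.exp_pos _).le)]
    have hb : ∀ ω, ENNReal.ofReal (Real.exp (β * M ω ^ 2))
        ≤ ENNReal.ofReal (Real.exp (β * M ω ^ 2) - 1) + 1 := by
      intro ω
      have h1 : (1:ℝ) ≤ Real.exp (β * M ω ^ 2) := Real.one_le_exp (by positivity)
      rw [← ENNReal.ofReal_one, ← ENNReal.ofReal_add (by linarith) zero_le_one]
      exact ENNReal.ofReal_le_ofReal (by linarith)
    calc (∫⁻ ω, ENNReal.ofReal (Real.exp (β * M ω ^ 2)) ∂μ)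
        ≤ ∫⁻ ω, (ENNReal.ofReal (Real.exp (β * M ω ^ 2) - 1) + 1) ∂μ := lintegral_mono hb
    _ = (∫⁻ ω, ENNReal.ofReal (Real.exp (β * M ω ^ 2) - 1) ∂μ) + 1 * μ Set.univ := by
        rw [lintegral_add_right _ measurable_const, lintegral_const]
    _ < ⊤ := by
        refine ENNReal.add_lt_top.2 ⟨hfin, ?_⟩
        simp [measure_lt_top]
  -- conclusion
  constructor
  · intro q hq
    have hq0 : (0:ℝ) < q := lt_of_lt_of_le one_pos hq
    refine ⟨hMmeas.aestronglyMeasurable, ?_⟩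
    rw [eLpNorm_eq_lintegral_rpow_enorm_toReal (by simp only [ne_eq, ENNReal.ofReal_eq_zero, not_le]; linarith)
      ENNReal.ofReal_ne_top]
    rw [ENNReal.toReal_ofReal hq0.le]
    refine ENNReal.rpow_lt_top_of_nonneg (by positivity) ?_
    have hb : ∀ᵐ ω ∂μ, (‖M ω‖₊ : ℝ≥0∞) ^ q
        ≤ ENNReal.ofReal (Real.exp (q ^ 2 / (4 * β)) * Real.exp (β * M ω ^ 2)) := by
      filter_upwards [hM0] with ω hω
      have h1 : ((‖M ω‖₊ : ℝ≥0∞)) ^ q = ENNReal.ofReal (M ω ^ q) := by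
        rw [← enorm_eq_nnnorm, ← ofReal_norm, ENNReal.ofReal_rpow_of_nonneg (norm_nonneg _) hq0.le,
          Real.norm_eq_abs, abs_of_nonneg hω]
      rw [h1]
      exact ENNReal.ofReal_le_ofReal (aux_rpow_le hβpos hq0.le hω)
    refine ne_of_lt (lt_of_le_of_lt (lintegral_mono_ae hb) ?_)
    exact (hexp_int.const_mul _).lintegral_lt_top
  · exact ⟨β, hβpos, hexp_int⟩
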